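/- Let G be a finite graph with vertex set {1,…,n}, let A be its adjacency matrix and A^c the matrix obtained by interchanging 0 and 1 in A. Then a subset J of vertices has a witness in A^c (i.e., there is a set of rows I with |I| = |J| such that A^c[I,J] can be put into lower unitriangular form, 1's on the diagonal and 0's above, by permuting rows and columns independently) if and only if the height of the semilattice generated under intersection by {St(j) : j ∈ J} equals |J|. -/

import Mathlib

/-- `St(W)`: the set of vertices adjacent to every vertex of `W` (so `St(∅) = V`). -/
def starW {V : Type*} (G : SimpleGraph V) (W : Set V) : Set V := {v | ∀ w ∈ W, G.Adj v w}

/-- The flats of `G`: all sets of the form `St(W)`, `W ⊆ V`. -/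
def flats {V : Type*} (G : SimpleGraph V) : Set (Set V) := {X | ∃ W : Set V, X = starW G W}

/-- Height of a family of sets: the largest `k` admitting a strictly decreasing chain
`X₀ ⊃ X₁ ⊃ … ⊃ X_k` inside the family. -/
noncomputable def heightOf {V : Type*} (F : Set (Set V)) : ℕ :=
  sSup {k | ∃ c : Fin (k + 1) → Set V, StrictAnti c ∧ ∀ i, c i ∈ F}

/-- The c-rank of a graph: the height of its lattice of flats. -/
noncomputable def crk {V : Type*} (G : SimpleGraph V) : ℕ := heightOf (flats G)

/-- `J` has a witness in `A_G^c`: there is an equal-size row set such that the corresponding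
submatrix of the complemented adjacency matrix can be put in lower unitriangular form
(1's on the diagonal, 0's above) by independently permuting rows and columns. -/
def hasWitness {V : Type*} (G : SimpleGraph V) (J : Finset V) : Prop :=
  ∃ i : Fin J.card → V, ∃ j : Fin J.card → V,
    Function.Injective i ∧ Function.Injective j ∧ (∀ r, j r ∈ J) ∧
    (∀ r, ¬ G.Adj (i r) (j r)) ∧ (∀ r s, r < s → G.Adj (i r) (j s))

/-- The c-rank of `G` defined via witnesses: maximum size of a vertex subset with a witness. -/
noncomputable def crkW {V : Type*} (G : SimpleGraph V) : ℕ :=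
  sSup {k | ∃ J : Finset V, J.card = k ∧ hasWitness G J}

namespace CrankProof

variable {V : Type*}

lemma starW_anti (G : SimpleGraph V) {W W' : Set V} (h : W ⊆ W') :
    starW G W' ⊆ starW G W := fun v hv w hw => hv w (h hw)

lemma fin_le_of_strictMono {k : ℕ} {f : Fin (k + 1) → ℕ} (hf : StrictMono f) :
    ∀ t, ∀ h : t < k + 1, t ≤ f ⟨t, h⟩ := by
  intro t
  induction t with
  | zero => intro h; exact Nat.zero_le _
  | succ n ih =>
    intro h
    have h1 : n < k + 1 := by omega
    have h2 := hf (show (⟨n, h1⟩ : Fin (k+1)) < ⟨n+1, h⟩ by simp [Fin.lt_def])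
    have := ih h1
    omega

lemma fin_add_le_of_strictMono {k : ℕ} {f : Fin (k + 1) → ℕ} (hf : StrictMono f) :
    ∀ d t, ∀ h : t + d = k, f ⟨t, by omega⟩ + d ≤ f (Fin.last k) := by
  intro d
  induction d with
  | zero =>
    intro t h
    have he : (⟨t, by omega⟩ : Fin (k+1)) = Fin.last k := Fin.ext (by simp; omega)
    rw [he]; simp
  | succ n ih =>
    intro t h
    have h1 := ih (t+1) (by omega)
    have h2 := hf (show (⟨t, by omega⟩ : Fin (k+1)) < ⟨t+1, by omega⟩ by simp [Fin.lt_def])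
    omega

lemma chain_data (G : SimpleGraph V) (J : Finset V) {k : ℕ} (c : Fin (k + 1) → Set V)
    (hc : StrictAnti c)
    (hF : ∀ i, ∃ W' : Set V, W' ⊆ (J : Set V) ∧ c i = starW G W') :
    ∃ D : Fin (k + 1) → Finset V, StrictMono D ∧ (∀ i, D i ⊆ J) ∧
      ∀ i, c i = starW G (D i : Set V) := by
  classical
  set D : Fin (k+1) → Finset V := fun i => J.filter (fun w => c i ⊆ starW G {w}) with hD
  have hsub : ∀ i, D i ⊆ J := fun i => Finset.filter_subset _ _
  have heq : ∀ i, c i = starW G (D i : Set V) := by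
    intro i
    obtain ⟨W', hW'J, hW'⟩ := hF i
    apply Set.Subset.antisymm
    · intro v hv w hw
      simp only [hD, Finset.coe_filter, Set.mem_setOf_eq] at hw
      exact (hw.2 hv) w rfl
    · have hWD : W' ⊆ (D i : Set V) := by
        intro w hw
        simp only [hD, Finset.coe_filter, Set.mem_setOf_eq]
        refine ⟨hW'J hw, ?_⟩
        intro v hv x hx
        rw [hW'] at hv
        rw [Set.mem_singleton_iff] at hx
        rw [hx]
        exact hv w hw
      calc starW G ((D i : Set V)) ⊆ starW G W' := starW_anti G hWD
        _ = c i := hW'.symm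
  refine ⟨D, ?_, hsub, heq⟩
  intro p q hpq
  rw [Finset.lt_iff_ssubset, Finset.ssubset_iff_subset_ne]
  constructor
  · intro w hw
    simp only [hD, Finset.mem_filter] at hw ⊢
    exact ⟨hw.1, (hc.antitone hpq.le).trans hw.2⟩
  · intro hEq
    have : c p = c q := by rw [heq p, heq q, hEq]
    exact absurd this (ne_of_gt (hc hpq))

lemma chain_le_card (G : SimpleGraph V) (J : Finset V) {k : ℕ} (c : Fin (k + 1) → Set V)
    (hc : StrictAnti c)
    (hF : ∀ i, ∃ W' : Set V, W' ⊆ (J : Set V) ∧ c i = starW G W') :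
    k ≤ J.card := by
  obtain ⟨D, hDmono, hDsub, _⟩ := chain_data G J c hc hF
  have h1 : k ≤ (D (Fin.last k)).card := by
    have := fin_le_of_strictMono (f := fun i => (D i).card)
      (fun a b hab => Finset.card_lt_card (Finset.lt_iff_ssubset.mp (hDmono hab))) k (by omega)
    simpa [Fin.last] using this
  exact h1.trans (Finset.card_le_card (hDsub _))

lemma witness_of_chain (G : SimpleGraph V) (J : Finset V) (c : Fin (J.card + 1) → Set V)
    (hc : StrictAnti c)
    (hF : ∀ i, ∃ W' : Set V, W' ⊆ (J : Set V) ∧ c i = starW G W') :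
    hasWitness G J := by
  classical
  obtain ⟨D, hDmono, hDsub, hDeq⟩ := chain_data G J c hc hF
  have hm : J.card = J.card := rfl
  have hcardmono : StrictMono (fun i => (D i).card) :=
    fun a b hab => Finset.card_lt_card (Finset.lt_iff_ssubset.mp (hDmono hab))
  have hcard : ∀ i : Fin (J.card + 1), (D i).card = (i : ℕ) := by
    intro i
    have hlow := fin_le_of_strictMono hcardmono i i.isLt
    have hhigh := fin_add_le_of_strictMono hcardmono (J.card - (i : ℕ)) (i : ℕ) (by omega)
    have hlast : (D (Fin.last J.card)).card ≤ J.card := Finset.card_le_card (hDsub _)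
    have hi : (⟨(i : ℕ), i.isLt⟩ : Fin (J.card + 1)) = i := Fin.ext rfl
    rw [hi] at hlow hhigh
    omega
  have hdiff : ∀ r : Fin J.card, ∃ x, x ∈ D r.succ \ D r.castSucc := by
    intro r
    have hsub' : D r.castSucc ⊆ D r.succ := (hDmono (Fin.castSucc_lt_succ : r.castSucc < r.succ)).le
    have : (D r.succ \ D r.castSucc).card = 1 := by
      rw [Finset.card_sdiff_of_subset hsub', hcard, hcard]
      simp [Fin.val_succ]
    have hne : (D r.succ \ D r.castSucc).Nonempty := by
      rw [← Finset.card_pos, this]; omega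
    exact hne
  choose jj hjj using hdiff
  have hx : ∀ r : Fin J.card, ∃ x, x ∈ c r.castSucc ∧ x ∉ c r.succ := by
    intro r
    have hss : c r.succ ⊂ c r.castSucc := hc (Fin.castSucc_lt_succ : r.castSucc < r.succ)
    obtain ⟨x, hx1, hx2⟩ := Set.exists_of_ssubset hss
    exact ⟨x, hx1, hx2⟩
  choose xx hx1 hx2 using hx
  have hjj1 : ∀ r, jj r ∈ D r.succ := fun r => (Finset.mem_sdiff.mp (hjj r)).1
  have hjj2 : ∀ r, jj r ∉ D r.castSucc := fun r => (Finset.mem_sdiff.mp (hjj r)).2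
  have hins : ∀ r : Fin J.card, D r.succ = insert (jj r) (D r.castSucc) := by
    intro r
    have hsub' : D r.castSucc ⊆ D r.succ := (hDmono (Fin.castSucc_lt_succ : r.castSucc < r.succ)).le
    have h1 : insert (jj r) (D r.castSucc) ⊆ D r.succ :=
      Finset.insert_subset (hjj1 r) hsub'
    refine (Finset.eq_of_subset_of_card_le h1 ?_).symm
    rw [Finset.card_insert_of_notMem (hjj2 r), hcard, hcard]
    simp [Fin.val_succ]
  -- adjacency facts
  have hadj : ∀ r : Fin J.card, ∀ w ∈ D r.castSucc, G.Adj (xx r) w := by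
    intro r w hw
    have := hx1 r
    rw [hDeq] at this
    exact this w hw
  have hnadj : ∀ r : Fin J.card, ¬ G.Adj (xx r) (jj r) := by
    intro r hA
    apply hx2 r
    rw [hDeq]
    intro w hw
    rw [hins r] at hw
    simp only [Finset.coe_insert, Set.mem_insert_iff, Finset.mem_coe] at hw
    rcases hw with rfl | hw
    · exact hA
    · exact hadj r w hw
  -- injectivity helpers
  have hxxinj : Function.Injective xx := by
    intro a b hEq
    by_contra hne
    rcases lt_or_gt_of_ne hne with h | h
    · apply hx2 a
      have : c b.castSucc ⊆ c a.succ := hc.antitone (Fin.le_def.mpr (by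
        have hh := Fin.lt_def.mp h
        simp only [Fin.val_succ, Fin.coe_castSucc] ; omega))
      rw [hEq]; exact this (hx1 b)
    · apply hx2 b
      have : c a.castSucc ⊆ c b.succ := hc.antitone (Fin.le_def.mpr (by
        have hh := Fin.lt_def.mp h
        simp only [Fin.val_succ, Fin.coe_castSucc] ; omega))
      rw [← hEq]; exact this (hx1 a)
  have hjjinj : Function.Injective jj := by
    intro a b hEq
    by_contra hne
    rcases lt_or_gt_of_ne hne with h | h
    · apply hjj2 b
      have : D a.succ ⊆ D b.castSucc := hDmono.monotone (Fin.le_def.mpr (by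
        have hh := Fin.lt_def.mp h
        simp only [Fin.val_succ, Fin.coe_castSucc] ; omega))
      rw [← hEq]; exact this (hjj1 a)
    · apply hjj2 a
      have : D b.succ ⊆ D a.castSucc := hDmono.monotone (Fin.le_def.mpr (by
        have hh := Fin.lt_def.mp h
        simp only [Fin.val_succ, Fin.coe_castSucc] ; omega))
      rw [hEq]; exact this (hjj1 b)
  refine ⟨fun r => xx r.rev, fun r => jj r.rev, ?_, ?_, ?_, ?_, ?_⟩
  · exact hxxinj.comp Fin.rev_injective
  · exact hjjinj.comp Fin.rev_injective
  · intro r; exact hDsub _ (hjj1 r.rev)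
  · intro r; exact hnadj r.rev
  · intro r s hrs
    have hlt : s.rev < r.rev := by rwa [Fin.rev_lt_rev]
    have hsub' : D s.rev.succ ⊆ D r.rev.castSucc := hDmono.monotone (Fin.le_def.mpr (by
      have hh := Fin.lt_def.mp hlt
      simp only [Fin.val_succ, Fin.coe_castSucc] ; omega))
    exact hadj r.rev _ (hsub' (hjj1 s.rev))

lemma chain_of_witness (G : SimpleGraph V) (J : Finset V) (h : hasWitness G J) :
    ∃ c : Fin (J.card + 1) → Set V, StrictAnti c ∧
      ∀ i, ∃ W' : Set V, W' ⊆ (J : Set V) ∧ c i = starW G W' := by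
  obtain ⟨i, j, hi, hj, hjJ, hnadj, hadj⟩ := h
  set c : Fin (J.card + 1) → Set V :=
    fun r => starW G (j '' {s : Fin J.card | J.card ≤ (s : ℕ) + (r : ℕ)}) with hcdef
  refine ⟨c, ?_, ?_⟩
  · intro r r' hrr'
    rw [Set.lt_iff_ssubset]
    have hsub : c r' ⊆ c r := by
      apply starW_anti
      apply Set.image_mono
      intro s hs
      simp only [Set.mem_setOf_eq] at hs ⊢
      have := hrr'.le
      rw [Fin.le_def] at this
      omega
    rw [Set.ssubset_iff_of_subset hsub]
    have hrm : (r : ℕ) < J.card := by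
      have := hrr'
      rw [Fin.lt_def] at this
      have := r'.isLt
      omega
    set t : Fin J.card := ⟨J.card - 1 - (r : ℕ), by omega⟩ with ht
    refine ⟨i t, ?_, ?_⟩
    · intro w hw
      obtain ⟨s, hs, rfl⟩ := hw
      simp only [Set.mem_setOf_eq] at hs
      apply hadj
      rw [Fin.lt_def]
      simp only [ht]
      omega
    · intro hmem
      apply hnadj t
      apply hmem
      refine ⟨t, ?_, rfl⟩
      simp only [Set.mem_setOf_eq, ht]
      have := hrr'
      rw [Fin.lt_def] at this
      omega
  · intro r
    refine ⟨j '' {s : Fin J.card | J.card ≤ (s : ℕ) + (r : ℕ)}, ?_, rfl⟩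
    intro w hw
    obtain ⟨s, _, rfl⟩ := hw
    exact hjJ s

end CrankProof

/-- For a finite graph `G` on vertex set `V` and `J ⊆ V`: `J` has a witness in the
complemented adjacency matrix `A^c` iff the height of the `∩`-semilattice generated by
`{St(j) : j ∈ J}` equals `|J|`. -/
theorem hasWitness_iff_height_eq_card
    {V : Type*} [Fintype V] (G : SimpleGraph V) (J : Finset V) :
    hasWitness G J ↔
      heightOf {X | ∃ W' : Set V, W' ⊆ (J : Set V) ∧ X = starW G W'} = J.card := by
  set F : Set (Set V) := {X | ∃ W' : Set V, W' ⊆ (J : Set V) ∧ X = starW G W'} with hFdef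
  set S : Set ℕ := {k | ∃ c : Fin (k + 1) → Set V, StrictAnti c ∧ ∀ i, c i ∈ F} with hSdef
  have hheight : heightOf F = sSup S := rfl
  have hbdd : ∀ k ∈ S, k ≤ J.card := by
    rintro k ⟨c, hc, hcF⟩
    exact CrankProof.chain_le_card G J c hc hcF
  have h0 : 0 ∈ S :=
    ⟨fun _ => starW G ∅, fun a b hab => absurd (Fin.lt_def.mp hab)
        (by have := a.isLt; have := b.isLt; omega),
      fun _ => ⟨∅, Set.empty_subset _, rfl⟩⟩
  constructor
  · intro hW
    obtain ⟨c, hc, hcF⟩ := CrankProof.chain_of_witness G J hW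
    have hmem : J.card ∈ S := ⟨c, hc, hcF⟩
    rw [hheight]
    exact le_antisymm (csSup_le ⟨_, hmem⟩ hbdd) (le_csSup ⟨J.card, hbdd⟩ hmem)
  · intro hEq
    rw [hheight] at hEq
    have hne : S.Nonempty := ⟨0, h0⟩
    have hbdd' : BddAbove S := ⟨J.card, hbdd⟩
    have hmem := Nat.sSup_mem hne hbdd'
    rw [hEq] at hmem
    obtain ⟨c, hc, hcF⟩ := hmem
    exact CrankProof.witness_of_chain G J c hc hcF
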